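/- For any two probability measures p, q on a measurable space, TV(p, q) ≤ 1 − (1/2) exp(−KL(p ‖ q)). -/

import Mathlib

open MeasureTheory
open scoped ENNReal Classical

/-- Total variation distance between two measures: `sup_B |p(B) − q(B)|`. -/
noncomputable def tvDist {𝒳 : Type*} [MeasurableSpace 𝒳] (p q : Measure 𝒳) : ℝ :=
  sSup {r : ℝ | ∃ B : Set 𝒳, MeasurableSet B ∧ r = |(p B).toReal - (q B).toReal|}

/-- Kullback–Leibler divergence, `∞` unless `p ≪ q` with integrable log-likelihood ratio. -/

noncomputable def klDiv {𝒳 : Type*} [MeasurableSpace 𝒳] (p q : Measure 𝒳) : ℝ≥0∞ :=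
  if p ≪ q ∧ Integrable (llr p q) p then ENNReal.ofReal (∫ x, llr p q x ∂p) else ⊤

/-- `exp(−x)` for `x ∈ [0, ∞]`, with `exp(−∞) = 0`. -/
noncomputable def expNeg (x : ℝ≥0∞) : ℝ :=
  if x = ⊤ then 0 else Real.exp (-x.toReal)

section BHaux
open Real
variable {𝒳 : Type*} [MeasurableSpace 𝒳]

/-- Cauchy–Schwarz step: `∫_s √(dq/dp) dp ≤ √(p s · q s)`. -/
lemma BH_cs (p q : Measure 𝒳) [IsProbabilityMeasure p] [IsProbabilityMeasure q]
    {s : Set 𝒳} (hs : MeasurableSet s) :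
    ∫ x in s, Real.sqrt (q.rnDeriv p x).toReal ∂p
      ≤ Real.sqrt ((p s).toReal * (q s).toReal) := by
  set h : 𝒳 → ℝ := fun x ↦ (q.rnDeriv p x).toReal with hh
  have hmeas : Measurable h := (Measure.measurable_rnDeriv q p).ennreal_toReal
  have hint : Integrable h (p.restrict s) :=
    (Measure.integrable_toReal_rnDeriv).restrict
  have hconj : Real.HolderConjugate 2 2 := ⟨by norm_num, by norm_num, by norm_num⟩
  have hmem : MemLp (fun x ↦ Real.sqrt (h x)) (ENNReal.ofReal 2) (p.restrict s) := by
    rw [show ENNReal.ofReal 2 = 2 by norm_num]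
    rw [memLp_two_iff_integrable_sq (hmeas.sqrt.aestronglyMeasurable)]
    refine hint.congr (Filter.Eventually.of_forall fun x ↦ ?_)
    exact (Real.sq_sqrt ENNReal.toReal_nonneg).symm
  have hmem1 : MemLp (fun _ : 𝒳 ↦ (1:ℝ)) (ENNReal.ofReal 2) (p.restrict s) :=
    memLp_const 1
  have hCS := integral_mul_le_Lp_mul_Lq_of_nonneg (μ := p.restrict s) hconj
    (Filter.Eventually.of_forall fun x ↦ Real.sqrt_nonneg (h x))
    (Filter.Eventually.of_forall fun _ ↦ zero_le_one) hmem hmem1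
  simp only [mul_one, one_pow] at hCS
  have h1 : ∫ a in s, Real.sqrt (h a) ^ (2:ℝ) ∂p = ∫ a in s, h a ∂p := by
    refine integral_congr_ae (Filter.Eventually.of_forall fun x ↦ ?_)
    show √(h x) ^ (2:ℝ) = h x
    rw [show (2:ℝ) = ((2:ℕ):ℝ) by norm_num, Real.rpow_natCast,
      Real.sq_sqrt ENNReal.toReal_nonneg]
  have h2 : ∫ _ in s, (1:ℝ) ^ (2:ℝ) ∂p = (p s).toReal := by
    simp [Measure.restrict_apply_univ, Measure.real]
  rw [h1, h2] at hCS
  have h3 : ∫ a in s, h a ∂p ≤ (q s).toReal :=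
    Measure.setIntegral_toReal_rnDeriv_le (measure_ne_top q s)
  have h4 : (∫ a in s, h a ∂p) ^ ((1:ℝ)/2) ≤ (q s).toReal ^ ((1:ℝ)/2) := by
    apply Real.rpow_le_rpow ?_ h3 (by norm_num)
    exact setIntegral_nonneg hs fun x _ ↦ ENNReal.toReal_nonneg
  calc ∫ x in s, Real.sqrt (h x) ∂p
      ≤ (∫ a in s, h a ∂p) ^ ((1:ℝ)/2) * (p s).toReal ^ ((1:ℝ)/2) := hCS
    _ ≤ (q s).toReal ^ ((1:ℝ)/2) * (p s).toReal ^ ((1:ℝ)/2) :=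
        mul_le_mul_of_nonneg_right h4 (Real.rpow_nonneg ENNReal.toReal_nonneg _)
    _ = Real.sqrt ((p s).toReal * (q s).toReal) := by
        rw [Real.sqrt_eq_rpow, Real.mul_rpow ENNReal.toReal_nonneg ENNReal.toReal_nonneg]
        ring

set_option maxHeartbeats 2000000 in
lemma BH_key (p q : Measure 𝒳) [IsProbabilityMeasure p] [IsProbabilityMeasure q]
    (hac : p ≪ q) (hint : Integrable (llr p q) p) {B : Set 𝒳} (hB : MeasurableSet B) :
    Real.exp (-∫ x, llr p q x ∂p) ≤ 2 * (1 - |(p B).toReal - (q B).toReal|) := by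
  set h : 𝒳 → ℝ := fun x ↦ (q.rnDeriv p x).toReal with hh
  have hmeas : Measurable h := (Measure.measurable_rnDeriv q p).ennreal_toReal
  have hint_h : Integrable h p := Measure.integrable_toReal_rnDeriv
  have hsqrt_ae : (fun x ↦ Real.exp (-llr p q x / 2)) =ᵐ[p] fun x ↦ Real.sqrt (h x) := by
    filter_upwards [exp_neg_llr hac] with x hx
    rw [Real.exp_half, hx]
  have hint_sqrt : Integrable (fun x ↦ Real.sqrt (h x)) p := by
    refine Integrable.mono ((integrable_const (1:ℝ)).add hint_h)
      hmeas.sqrt.aestronglyMeasurable (Filter.Eventually.of_forall fun x ↦ ?_)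
    have h0 : (0:ℝ) ≤ h x := ENNReal.toReal_nonneg
    simp only [Pi.add_apply]
    rw [Real.norm_eq_abs, Real.norm_eq_abs, abs_of_nonneg (Real.sqrt_nonneg _),
      abs_of_nonneg (by linarith)]
    nlinarith [sq_nonneg (Real.sqrt (h x) - 1), Real.sq_sqrt h0, Real.sqrt_nonneg (h x)]
  have hJ : Real.exp (∫ x, -llr p q x / 2 ∂p) ≤ ∫ x, Real.exp (-llr p q x / 2) ∂p := by
    refine convexOn_exp.map_integral_le continuous_exp.continuousOn isClosed_univ
      (Filter.Eventually.of_forall fun x ↦ Set.mem_univ _) ((hint.neg).div_const 2) ?_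
    exact hint_sqrt.congr hsqrt_ae.symm
  have hintllr : ∫ x, -llr p q x / 2 ∂p = -(∫ x, llr p q x ∂p) / 2 := by
    rw [integral_div, integral_neg]
  rw [hintllr, integral_congr_ae hsqrt_ae] at hJ
  -- notation
  set a := (p B).toReal
  set b := (q B).toReal
  set c := (p Bᶜ).toReal
  set d := (q Bᶜ).toReal
  have hcompl : ∀ (μ : Measure 𝒳), IsProbabilityMeasure μ →
      (μ Bᶜ).toReal = 1 - (μ B).toReal := by
    intro μ hμ
    rw [prob_compl_eq_one_sub hB, ENNReal.toReal_sub_of_le prob_le_one (by simp)]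
    simp
  have hac1 : c = 1 - a := hcompl p inferInstance
  have hbd1 : d = 1 - b := hcompl q inferInstance
  have ha0 : 0 ≤ a := ENNReal.toReal_nonneg
  have hb0 : 0 ≤ b := ENNReal.toReal_nonneg
  have hc0 : 0 ≤ c := ENNReal.toReal_nonneg
  have hd0 : 0 ≤ d := ENNReal.toReal_nonneg
  have hsplit : ∫ x in B, Real.sqrt (h x) ∂p + ∫ x in Bᶜ, Real.sqrt (h x) ∂p
      = ∫ x, Real.sqrt (h x) ∂p := integral_add_compl hB hint_sqrt
  have hcs1 := BH_cs p q hB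
  have hcs2 := BH_cs p q hB.compl
  set u := Real.sqrt (a * b)
  set v := Real.sqrt (c * d)
  have hE : Real.exp (-(∫ x, llr p q x ∂p) / 2) ≤ u + v := by
    calc Real.exp (-(∫ x, llr p q x ∂p) / 2) ≤ ∫ x, Real.sqrt (h x) ∂p := hJ
      _ = ∫ x in B, Real.sqrt (h x) ∂p + ∫ x in Bᶜ, Real.sqrt (h x) ∂p := hsplit.symm
      _ ≤ u + v := add_le_add hcs1 hcs2
  -- algebra
  set w := Real.sqrt (a * c)
  set z := Real.sqrt (b * d)
  have hu2 : u ^ 2 = a * b := Real.sq_sqrt (by positivity)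
  have hv2 : v ^ 2 = c * d := Real.sq_sqrt (by positivity)
  have hw2 : w ^ 2 = a * c := Real.sq_sqrt (by positivity)
  have hz2 : z ^ 2 = b * d := Real.sq_sqrt (by positivity)
  have huv : u * v = w * z := by
    rw [show u * v = Real.sqrt (a * b * (c * d)) by
        rw [Real.sqrt_mul (by positivity)],
      show w * z = Real.sqrt (a * c * (b * d)) by
        rw [Real.sqrt_mul (by positivity)]]
    congr 1; ring
  have hE0 : 0 < Real.exp (-(∫ x, llr p q x ∂p) / 2) := Real.exp_pos _
  have hEsq : Real.exp (-∫ x, llr p q x ∂p)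
      = Real.exp (-(∫ x, llr p q x ∂p) / 2) ^ 2 := by
    rw [← Real.exp_nat_mul]
    congr 1; ring
  rw [hEsq]
  have ha1 : a ≤ 1 := by linarith
  have hb1 : b ≤ 1 := by linarith
  have hkey : (u + v) ^ 2 ≤ 1 - (a - b) ^ 2 := by
    nlinarith [sq_nonneg (w - z)]
  have hE2 : Real.exp (-(∫ x, llr p q x ∂p) / 2) ^ 2 ≤ (u + v) ^ 2 := by
    have hu0 : 0 ≤ u := Real.sqrt_nonneg _
    have hv0 : 0 ≤ v := Real.sqrt_nonneg _
    nlinarith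
  rcases abs_cases (a - b) with ⟨habs, _⟩ | ⟨habs, _⟩ <;> rw [habs] <;>
    nlinarith [sq_nonneg (1 - (a - b)), sq_nonneg (1 - (b - a))]

end BHaux

lemma expNeg_nonneg (x : ℝ≥0∞) : 0 ≤ expNeg x := by
  unfold expNeg; split_ifs
  · exact le_refl 0
  · exact (Real.exp_pos _).le

lemma expNeg_le_one (x : ℝ≥0∞) : expNeg x ≤ 1 := by
  unfold expNeg; split_ifs
  · norm_num
  · calc Real.exp (-x.toReal) ≤ Real.exp 0 :=
        Real.exp_le_exp.mpr (neg_nonpos.mpr ENNReal.toReal_nonneg)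
      _ = 1 := Real.exp_zero

/-- Bretagnolle–Huber inequality: for any two probability measures `p, q`,
`TV(p, q) ≤ 1 − (1/2) exp(−KL(p ‖ q))`. -/
theorem stmt17 {𝒳 : Type*} [MeasurableSpace 𝒳] (p q : Measure 𝒳)
    [IsProbabilityMeasure p] [IsProbabilityMeasure q] :
    tvDist p q ≤ 1 - (1 / 2) * expNeg (klDiv p q) := by
  have hb : ∀ (μ : Measure 𝒳) (s : Set 𝒳), IsProbabilityMeasure μ →
      (μ s).toReal ≤ 1 := by
    intro μ s hμ
    calc (μ s).toReal ≤ (μ Set.univ).toReal :=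
        ENNReal.toReal_mono (by simp) (measure_mono (Set.subset_univ s))
      _ = 1 := by simp
  refine Real.sSup_le ?_ ?_
  · rintro r ⟨B, hB, rfl⟩
    have ha0 : (0:ℝ) ≤ (p B).toReal := ENNReal.toReal_nonneg
    have hb0 : (0:ℝ) ≤ (q B).toReal := ENNReal.toReal_nonneg
    have ha1 := hb p B inferInstance
    have hb1 := hb q B inferInstance
    by_cases hc : p ≪ q ∧ Integrable (llr p q) p
    · rw [klDiv, if_pos hc]
      set t := ∫ x, llr p q x ∂p with ht
      have hkey := BH_key p q hc.1 hc.2 hB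
      rw [expNeg, if_neg ENNReal.ofReal_ne_top]
      have hle : t ≤ (ENNReal.ofReal t).toReal := by
        by_cases h0 : 0 ≤ t
        · rw [ENNReal.toReal_ofReal h0]
        · rw [ENNReal.ofReal_of_nonpos (le_of_not_ge h0)]
          simpa using le_of_not_ge h0
      have : Real.exp (-(ENNReal.ofReal t).toReal) ≤ Real.exp (-t) :=
        Real.exp_le_exp.mpr (neg_le_neg hle)
      linarith
    · rw [klDiv, if_neg hc, expNeg, if_pos rfl]
      rw [abs_le]
      constructor <;> [skip; skip] <;> · norm_num; linarith
  · have h1 := expNeg_le_one (klDiv p q)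
    linarith
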